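/- Let A be a Noetherian integral domain with fraction field K, and let v be an additive real-valued valuation on K such that v(a) ≥ 0 for every nonzero a ∈ A. Then the value semigroup Γ := {v(a) : a ∈ A, a ≠ 0} ⊆ [0, ∞) is discrete; more precisely, for every real number ρ the set Γ ∩ [0, ρ] is finite. -/

import Mathlib

set_option linter.unusedSectionVars false
namespace Statement5Aux

variable {A : Type*} [CommRing A] [IsDomain A]

/-- Bundled additive valuation data on a ring. -/
structure AV (A : Type*) [CommRing A] where
  w : A → WithTop ℝ
  top_iff : ∀ a, w a = ⊤ ↔ a = 0
  map_mul : ∀ a b, w (a * b) = w a + w b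
  min_le : ∀ a b, min (w a) (w b) ≤ w (a + b)
  nonneg : ∀ a, a ≠ 0 → 0 ≤ w a

namespace AV

variable (V : AV A)

lemma w_zero : V.w 0 = ⊤ := (V.top_iff 0).mpr rfl

lemma w_one : V.w 1 = 0 := by
  have h1 : (1 : A) ≠ 0 := one_ne_zero
  have hne : V.w 1 ≠ ⊤ := fun h => h1 ((V.top_iff 1).mp h)
  obtain ⟨r, hr⟩ := WithTop.ne_top_iff_exists.mp hne
  have h : V.w 1 = V.w 1 + V.w 1 := by
    conv_lhs => rw [show (1 : A) = 1 * 1 by ring, V.map_mul]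
  rw [← hr] at h
  have : r = r + r := by exact_mod_cast h
  have : r = 0 := by linarith
  rw [← hr, this]; rfl

lemma w_neg (a : A) : V.w (-a) = V.w a := by
  have hm1 : V.w (-1 : A) = 0 := by
    have h : V.w ((-1 : A) * (-1)) = V.w (-1) + V.w (-1) := V.map_mul _ _
    rw [show ((-1 : A) * (-1)) = 1 by ring, V.w_one] at h
    rcases eq_or_ne (V.w (-1)) ⊤ with ht | ht
    · rw [ht] at h; simp at h
    · obtain ⟨r, hr⟩ := WithTop.ne_top_iff_exists.mp ht
      rw [← hr] at h
      have : (0 : ℝ) = r + r := by exact_mod_cast h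
      have : r = 0 := by linarith
      rw [← hr, this]; rfl
  calc V.w (-a) = V.w ((-1) * a) := by ring_nf
    _ = V.w (-1) + V.w a := V.map_mul _ _
    _ = V.w a := by rw [hm1, zero_add]

/-- ultrametric equality -/
lemma w_add_eq_of_lt {x y : A} (h : V.w x < V.w y) : V.w (x + y) = V.w x := by
  refine le_antisymm ?_ ?_
  · by_contra hc
    push_neg at hc
    have h2 : V.w x = V.w ((x + y) + (-y)) := by ring_nf
    have h3 : min (V.w (x + y)) (V.w (-y)) ≤ V.w x := h2 ▸ V.min_le _ _
    rw [V.w_neg] at h3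
    exact absurd h3 (not_le.mpr (lt_min hc h))
  · exact le_trans (le_min le_rfl h.le) (V.min_le x y)

lemma w_sum_le {ι : Type*} (s : Finset ι) (g : ι → A) (δ : WithTop ℝ)
    (h : ∀ i ∈ s, δ ≤ V.w (g i)) : δ ≤ V.w (∑ i ∈ s, g i) := by
  classical
  induction s using Finset.cons_induction with
  | empty => simp [V.w_zero]
  | cons a s ha ih =>
    rw [Finset.sum_cons]
    refine le_trans (le_min (h a (Finset.mem_cons_self a s)) ?_) (V.min_le _ _)
    exact ih fun i hi => h i (Finset.mem_cons_of_mem hi)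

lemma w_sum_lt {ι : Type*} (s : Finset ι) (g : ι → A) (δ : ℝ)
    (h : ∀ i ∈ s, (δ : WithTop ℝ) < V.w (g i)) : (δ : WithTop ℝ) < V.w (∑ i ∈ s, g i) := by
  classical
  induction s using Finset.cons_induction with
  | empty => simp [V.w_zero]
  | cons a s ha ih =>
    rw [Finset.sum_cons]
    refine lt_of_lt_of_le (lt_min (h a (Finset.mem_cons_self a s)) ?_) (V.min_le _ _)
    exact ih fun i hi => h i (Finset.mem_cons_of_mem hi)

/-- value of a sum with a unique strict minimum term -/
lemma w_sum_eq_min {ι : Type*} [DecidableEq ι] (s : Finset ι) (g : ι → A) (i₀ : ι)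
    (hi₀ : i₀ ∈ s) (r : ℝ) (hr : V.w (g i₀) = (r : WithTop ℝ))
    (hmin : ∀ j ∈ s, j ≠ i₀ → V.w (g i₀) < V.w (g j)) :
    V.w (∑ i ∈ s, g i) = (r : WithTop ℝ) := by
  rw [← Finset.add_sum_erase s g hi₀]
  have hrest : (r : WithTop ℝ) < V.w (∑ i ∈ s.erase i₀, g i) := by
    refine V.w_sum_lt _ _ _ fun j hj => ?_
    rw [← hr]
    exact hmin j (Finset.mem_of_mem_erase hj) (Finset.ne_of_mem_erase hj)
  rw [← hr] at hrest ⊢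
  exact V.w_add_eq_of_lt hrest

/-- the ideal of elements of value ≥ c -/
def Iv (c : ℝ) : Ideal A where
  carrier := {a | (c : WithTop ℝ) ≤ V.w a}
  zero_mem' := by simp [V.w_zero]
  add_mem' := by
    intro a b haa hbb
    exact le_trans (le_min haa hbb) (V.min_le a b)
  smul_mem' := by
    intro t x hx
    simp only [Set.mem_setOf_eq, smul_eq_mul]
    rcases eq_or_ne t 0 with rfl | ht
    · simp [V.w_zero]
    · rw [V.map_mul]
      calc (c : WithTop ℝ) ≤ V.w x := hx
        _ = 0 + V.w x := (zero_add _).symm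
        _ ≤ V.w t + V.w x := add_le_add_left (V.nonneg t ht) _

lemma mem_Iv {c : ℝ} {a : A} : a ∈ V.Iv c ↔ (c : WithTop ℝ) ≤ V.w a := Iff.rfl

/-- the prime ideal of positive value -/
def posIdeal : Ideal A where
  carrier := {a | 0 < V.w a}
  zero_mem' := by simp [V.w_zero]
  add_mem' := by
    intro a b haa hbb
    exact lt_of_lt_of_le (lt_min haa hbb) (V.min_le a b)
  smul_mem' := by
    intro t x hx
    simp only [Set.mem_setOf_eq, smul_eq_mul]
    rcases eq_or_ne t 0 with rfl | ht
    · simp [V.w_zero]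
    · rw [V.map_mul]
      calc (0 : WithTop ℝ) < V.w x := hx
        _ = 0 + V.w x := (zero_add _).symm
        _ ≤ V.w t + V.w x := add_le_add_left (V.nonneg t ht) _

lemma mem_posIdeal {a : A} : a ∈ V.posIdeal ↔ 0 < V.w a := Iff.rfl

end AV

end Statement5Aux

namespace Statement5Aux
namespace AV
variable {A : Type*} [CommRing A] [IsDomain A] (V : AV A)

lemma gap [IsNoetherianRing A] (hne : V.posIdeal ≠ ⊥) :
    ∃ γ₀ : ℝ, 0 < γ₀ ∧ ∀ a ∈ V.posIdeal, (γ₀ : WithTop ℝ) ≤ V.w a := by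
  classical
  have hNoeth : IsNoetherian A A := isNoetherianRing_iff.mp ‹_›
  obtain ⟨s, hs⟩ := IsNoetherian.noetherian V.posIdeal
  set t := s.erase 0 with ht_def
  have hspan : Ideal.span (↑t : Set A) = V.posIdeal := by
    refine le_antisymm ?_ ?_
    · rw [← hs]
      exact Submodule.span_mono (by exact_mod_cast Finset.erase_subset 0 s)
    · rw [← hs]
      have hsub : Submodule.span A (↑s : Set A) ≤ Submodule.span A (insert 0 (↑t : Set A)) := by
        refine Submodule.span_mono ?_
        intro x hx
        rcases eq_or_ne x 0 with rfl | hx0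
        · exact Set.mem_insert 0 _
        · exact Set.mem_insert_of_mem _ (Finset.mem_coe.mpr (Finset.mem_erase.mpr ⟨hx0, hx⟩))
      rwa [Submodule.span_insert_zero] at hsub
  have htne : t.Nonempty := by
    by_contra h
    rw [Finset.not_nonempty_iff_eq_empty] at h
    rw [h] at hspan
    simp only [Finset.coe_empty, Ideal.span_empty] at hspan
    exact hne hspan.symm
  set δ : WithTop ℝ := t.inf' htne (fun x => V.w x) with hδ_def
  have hδpos : 0 < δ := by
    rw [Finset.lt_inf'_iff]
    intro x hx
    have : x ∈ V.posIdeal := by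
      rw [← hspan]; exact Submodule.subset_span (Finset.mem_coe.mpr hx)
    exact this
  have hδne : δ ≠ ⊤ := by
    obtain ⟨x₀, hx₀⟩ := htne
    have h1 : δ ≤ V.w x₀ := Finset.inf'_le _ hx₀
    have hx0 : x₀ ≠ 0 := (Finset.mem_erase.mp hx₀).1
    intro h
    rw [h, top_le_iff] at h1
    exact hx0 ((V.top_iff x₀).mp h1)
  obtain ⟨γ₀, hγ₀⟩ := WithTop.ne_top_iff_exists.mp hδne
  refine ⟨γ₀, ?_, ?_⟩
  · have : (0 : WithTop ℝ) < (γ₀ : WithTop ℝ) := hγ₀ ▸ hδpos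
    exact_mod_cast this
  · intro a hmem
    rw [← hspan] at hmem
    induction hmem using Submodule.span_induction with
    | mem x hx => exact hγ₀ ▸ Finset.inf'_le _ (Finset.mem_coe.mp hx)
    | zero => simp [V.w_zero]
    | add x y hx hy ihx ihy => exact le_trans (le_min ihx ihy) (V.min_le x y)
    | smul c x hx ih =>
      simp only [smul_eq_mul]
      rcases eq_or_ne c 0 with rfl | hc
      · simp [V.w_zero]
      · rw [V.map_mul]
        calc (γ₀ : WithTop ℝ) ≤ V.w x := ih
          _ = 0 + V.w x := (zero_add _).symm
          _ ≤ V.w c + V.w x := add_le_add_left (V.nonneg c hc) _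

lemma window_finite [IsNoetherianRing A] {γ₀ : ℝ} (hγ₀ : 0 < γ₀)
    (hgap : ∀ a : A, a ≠ 0 → V.w a = 0 ∨ (γ₀ : WithTop ℝ) ≤ V.w a) (c : ℝ) :
    {r : ℝ | (∃ a : A, a ≠ 0 ∧ V.w a = (r : WithTop ℝ)) ∧ c ≤ r ∧ r < c + γ₀}.Finite := by
  classical
  by_contra hinf
  set S := {r : ℝ | (∃ a : A, a ≠ 0 ∧ V.w a = (r : WithTop ℝ)) ∧ c ≤ r ∧ r < c + γ₀}
  have hinf' : S.Infinite := hinf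
  let e : ℕ ↪ S := hinf'.natEmbedding
  set r : ℕ → ℝ := fun i => (e i : ℝ) with hr_def
  have rinj : Function.Injective r := fun i j h => e.injective (Subtype.ext h)
  have hprop : ∀ i, (∃ a : A, a ≠ 0 ∧ V.w a = ((r i : ℝ) : WithTop ℝ)) ∧ c ≤ r i ∧ r i < c + γ₀ :=
    fun i => (e i).2
  set a : ℕ → A := fun i => (hprop i).1.choose with ha_def
  have ha0 : ∀ i, a i ≠ 0 := fun i => (hprop i).1.choose_spec.1
  have hwa : ∀ i, V.w (a i) = ((r i : ℝ) : WithTop ℝ) := fun i => (hprop i).1.choose_spec.2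
  have ainj : Function.Injective a := by
    intro i j h
    apply rinj
    have := hwa i
    rw [h, hwa j] at this
    exact_mod_cast this.symm
  -- the chain of ideals
  set J : ℕ →o Ideal A :=
    ⟨fun n => V.Iv (c + γ₀) ⊔ Ideal.span (↑((Finset.range n).image a) : Set A), by
      intro n m hnm
      exact sup_le_sup_left (Ideal.span_mono (by
        exact_mod_cast Finset.image_subset_image (Finset.range_subset_range.mpr hnm))) _⟩ with hJ_def
  have hNoeth : IsNoetherian A A := isNoetherianRing_iff.mp ‹_›
  obtain ⟨n, hn⟩ := monotone_stabilizes_iff_noetherian.mpr hNoeth J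
  have han : a n ∈ J n := by
    rw [hn (n+1) (Nat.le_succ n)]
    refine Submodule.mem_sup_right (Submodule.subset_span ?_)
    exact Finset.mem_coe.mpr (Finset.mem_image_of_mem a (Finset.mem_range.mpr (Nat.lt_succ_self n)))
  obtain ⟨b, hb, z, hz, hbz⟩ := Submodule.mem_sup.mp han
  obtain ⟨f, -, hf⟩ := Submodule.mem_span_finset.mp hz
  have hzsum : z = ∑ i ∈ Finset.range n, f (a i) * a i := by
    rw [← hf, Finset.sum_image (fun x _ y _ h => ainj h)]
    simp [smul_eq_mul]
  -- the auxiliary sequence of terms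
  set g : ℕ → A := fun i => if i < n then f (a i) * a i else if i = n then b else -(a n) with hg_def
  have hsum : ∑ i ∈ Finset.range (n + 2), g i = 0 := by
    rw [Finset.sum_range_succ, Finset.sum_range_succ]
    have h1 : ∑ i ∈ Finset.range n, g i = z := by
      rw [hzsum]
      refine Finset.sum_congr rfl fun i hi => ?_
      simp [hg_def, Finset.mem_range.mp hi]
    have h2 : g n = b := by simp [hg_def]
    have h3 : g (n + 1) = -(a n) := by
      simp only [hg_def]
      rw [if_neg (by omega), if_neg (by omega)]
    rw [h1, h2, h3]
    rw [show z + b + -(a n) = (b + z) - a n by ring, hbz, sub_self]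
  set val : ℕ → ℝ := fun i => if i < n then r i else r n with hval_def
  have claimA : ∀ i ∈ Finset.range (n + 2),
      (((c + γ₀ : ℝ) : WithTop ℝ) ≤ V.w (g i)) ∨ V.w (g i) = ((val i : ℝ) : WithTop ℝ) := by
    intro i hi
    rcases lt_trichotomy i n with hlt | heq | hgt
    · have hgi : g i = f (a i) * a i := by simp [hg_def, hlt]
      rcases eq_or_ne (f (a i)) 0 with hf0 | hf0
      · left; rw [hgi, hf0, zero_mul, V.w_zero]; exact le_top
      · rw [hgi, V.map_mul]
        rcases hgap (f (a i)) hf0 with h0 | hge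
        · right
          rw [h0, zero_add, hwa i]
          simp [hval_def, hlt]
        · left
          rw [hwa i]
          have hcr : ((c : ℝ) : WithTop ℝ) ≤ (r i : ℝ) := by exact_mod_cast (hprop i).2.1
          calc ((c + γ₀ : ℝ) : WithTop ℝ) = (γ₀ : ℝ) + (c : ℝ) := by
                push_cast; rw [add_comm]
            _ ≤ V.w (f (a i)) + ((r i : ℝ) : WithTop ℝ) := add_le_add hge hcr
    · left
      have hgi : g i = b := by simp [hg_def, heq]
      rw [hgi]
      exact hb
    · right
      have hieq : i = n + 1 := by
        have := Finset.mem_range.mp hi; omega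
      have hgi : g i = -(a n) := by
        simp only [hg_def]
        rw [if_neg (by omega), if_neg (by omega)]
      rw [hgi, V.w_neg, hwa n]
      have : val i = r n := by simp [hval_def, Nat.not_lt.mpr hgt.le]
      rw [this]
  -- find the index of minimal value
  obtain ⟨i₀, hi₀mem, hi₀min⟩ := Finset.exists_min_image (Finset.range (n + 2))
    (fun i => V.w (g i)) ⟨n + 1, Finset.mem_range.mpr (by omega)⟩
  have hgn1 : V.w (g (n + 1)) = ((r n : ℝ) : WithTop ℝ) := by
    have hgi : g (n + 1) = -(a n) := by
      simp only [hg_def]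
      rw [if_neg (by omega), if_neg (by omega)]
    rw [hgi, V.w_neg, hwa n]
  have hsmall : V.w (g i₀) < ((c + γ₀ : ℝ) : WithTop ℝ) := by
    calc V.w (g i₀) ≤ V.w (g (n + 1)) := hi₀min _ (Finset.mem_range.mpr (by omega))
      _ = ((r n : ℝ) : WithTop ℝ) := hgn1
      _ < ((c + γ₀ : ℝ) : WithTop ℝ) := by exact_mod_cast (hprop n).2.2
  have hval_i₀ : V.w (g i₀) = ((val i₀ : ℝ) : WithTop ℝ) := by
    rcases claimA i₀ hi₀mem with h | h
    · exact absurd hsmall (not_lt.mpr h)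
    · exact h
  -- indices with small values are not n
  have hnot_n : ∀ j ∈ Finset.range (n + 2), V.w (g j) < ((c + γ₀ : ℝ) : WithTop ℝ) → j ≠ n := by
    intro j _ hj hjn
    have : g j = b := by simp [hg_def, hjn]
    rw [this] at hj
    exact absurd hb (not_le.mpr hj)
  have hstrict : ∀ j ∈ Finset.range (n + 2), j ≠ i₀ → V.w (g i₀) < V.w (g j) := by
    intro j hj hji₀
    refine lt_of_le_of_ne (hi₀min j hj) ?_
    intro heq
    have hjsmall : V.w (g j) < ((c + γ₀ : ℝ) : WithTop ℝ) := heq ▸ hsmall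
    have hval_j : V.w (g j) = ((val j : ℝ) : WithTop ℝ) := by
      rcases claimA j hj with h | h
      · exact absurd hjsmall (not_lt.mpr h)
      · exact h
    have hvv : val i₀ = val j := by
      have : ((val i₀ : ℝ) : WithTop ℝ) = ((val j : ℝ) : WithTop ℝ) := by
        rw [← hval_i₀, ← hval_j, heq]
      exact_mod_cast this
    have hi₀n : i₀ ≠ n := hnot_n i₀ hi₀mem hsmall
    have hjn : j ≠ n := hnot_n j hj hjsmall
    -- val is injective on indices ≠ n in range (n+2)
    have hi₀r : i₀ < n + 2 := Finset.mem_range.mp hi₀mem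
    have hjr : j < n + 2 := Finset.mem_range.mp hj
    rcases Nat.lt_or_ge i₀ n with h1 | h1 <;> rcases Nat.lt_or_ge j n with h2 | h2
    · have hre : r i₀ = r j := by simpa [hval_def, h1, h2] using hvv
      exact hji₀ (rinj hre).symm
    · have hre : r i₀ = r n := by simpa [hval_def, h1, Nat.not_lt.mpr h2] using hvv
      have := rinj hre
      omega
    · have hre : r n = r j := by simpa [hval_def, Nat.not_lt.mpr h1, h2] using hvv
      have := rinj hre
      omega
    · omega
  have := V.w_sum_eq_min (Finset.range (n + 2)) g i₀ hi₀mem (val i₀) hval_i₀ hstrict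
  rw [hsum, V.w_zero] at this
  exact WithTop.coe_ne_top this.symm

end AV
end Statement5Aux
/-- Let `A` be a Noetherian integral domain with fraction field `K`, and
let `v` be an additive real-valued valuation on `K` which is nonnegative on the nonzero
elements of `A`.  Then the value semigroup `Γ = {v a : a ∈ A, a ≠ 0} ⊆ [0,∞)` is
discrete: for every `ρ : ℝ` the set `Γ ∩ [0, ρ]` is finite. -/
theorem statement5 {A K : Type*} [CommRing A] [IsDomain A] [IsNoetherianRing A]
    [Field K] [Algebra A K] [IsFractionRing A K]
    (v : K → WithTop ℝ)
    (hv0 : ∀ x : K, v x = ⊤ ↔ x = 0)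
    (hvmul : ∀ x y : K, v (x * y) = v x + v y)
    (hvadd : ∀ x y : K, min (v x) (v y) ≤ v (x + y))
    (hpos : ∀ a : A, a ≠ 0 → 0 ≤ v (algebraMap A K a)) :
    ∀ ρ : ℝ,
      {r : ℝ | (∃ a : A, a ≠ 0 ∧ v (algebraMap A K a) = (r : WithTop ℝ)) ∧
        0 ≤ r ∧ r ≤ ρ}.Finite := by
  intro ρ
  have hinj : Function.Injective (algebraMap A K) := IsFractionRing.injective A K
  set V : Statement5Aux.AV A :=
    { w := fun a => v (algebraMap A K a)
      top_iff := by
        intro a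
        rw [hv0]
        constructor
        · intro h
          apply hinj
          rw [h, map_zero]
        · intro h; rw [h, map_zero]
      map_mul := by
        intro a b
        show v (algebraMap A K (a * b)) = v (algebraMap A K a) + v (algebraMap A K b)
        rw [map_mul, hvmul]
      min_le := by
        intro a b
        show min (v (algebraMap A K a)) (v (algebraMap A K b)) ≤ v (algebraMap A K (a + b))
        rw [map_add]
        exact hvadd _ _
      nonneg := hpos } with hV_def
  have hwdef : ∀ a : A, V.w a = v (algebraMap A K a) := fun a => rfl
  rcases eq_or_ne V.posIdeal ⊥ with hbot | hne
  · -- all nonzero elements have value 0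
    refine Set.Finite.subset (Set.finite_singleton 0) ?_
    intro x hx
    obtain ⟨⟨a, ha0, hwa⟩, hx0, hxρ⟩ := hx
    rw [← hwdef] at hwa
    have h1 : a ∉ V.posIdeal := by rw [hbot]; simpa using ha0
    have h2 : ¬ (0 : WithTop ℝ) < V.w a := fun h => h1 h
    have h3 : V.w a = 0 := le_antisymm (not_lt.mp h2) (V.nonneg a ha0)
    rw [h3] at hwa
    have : (0 : ℝ) = x := by exact_mod_cast hwa
    simp [← this]
  · obtain ⟨γ₀, hγ₀pos, hγ₀⟩ := V.gap hne
    have hgap : ∀ a : A, a ≠ 0 → V.w a = 0 ∨ (γ₀ : WithTop ℝ) ≤ V.w a := by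
      intro a ha0
      rcases eq_or_ne (V.w a) 0 with h | h
      · exact Or.inl h
      · refine Or.inr (hγ₀ a ?_)
        exact lt_of_le_of_ne (V.nonneg a ha0) (Ne.symm h)
    obtain ⟨m, hm⟩ := exists_nat_gt (ρ / γ₀)
    have hρm : ρ < m * γ₀ := by
      rw [div_lt_iff₀ hγ₀pos] at hm
      exact hm
    refine Set.Finite.subset
      (Set.Finite.biUnion (Finset.range m).finite_toSet
        (fun k _ => V.window_finite hγ₀pos hgap ((k : ℝ) * γ₀))) ?_
    intro x hx
    obtain ⟨⟨a, ha0, hwa⟩, hx0, hxρ⟩ := hx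
    set k : ℕ := ⌊x / γ₀⌋₊ with hk_def
    have hk1 : (k : ℝ) * γ₀ ≤ x := by
      have := Nat.floor_le (div_nonneg hx0 hγ₀pos.le)
      calc (k : ℝ) * γ₀ ≤ (x / γ₀) * γ₀ := by nlinarith
        _ = x := div_mul_cancel₀ x hγ₀pos.ne'
    have hk2 : x < (k : ℝ) * γ₀ + γ₀ := by
      have h := Nat.lt_floor_add_one (x / γ₀)
      have h2 : x / γ₀ < (k : ℝ) + 1 := by exact_mod_cast h
      have h3 : x < ((k : ℝ) + 1) * γ₀ := (div_lt_iff₀ hγ₀pos).mp h2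
      linarith
    have hkm : k < m := by
      by_contra hc
      push_neg at hc
      have : (m : ℝ) * γ₀ ≤ (k : ℝ) * γ₀ := by
        have : (m : ℝ) ≤ (k : ℝ) := by exact_mod_cast hc
        nlinarith
      linarith
    refine Set.mem_biUnion (Finset.mem_coe.mpr (Finset.mem_range.mpr hkm)) ?_
    exact ⟨⟨a, ha0, by rw [hwdef]; exact hwa⟩, hk1, hk2⟩
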